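/- Auxiliary bound for the coefficient lemma: |B̃_m^j| ≤ 2^j √(2j+1) for all j ∈ ℕ₀ and 0 ≤ m ≤ j. -/
import Mathlib

lemma termA (y c a : ℝ) (hy : 0 ≤ y) (ha : |a| ≤ c * Real.sqrt (2*y+1)) :
    |Real.sqrt ((2*(y+1)+3)/(2*(y+1)-1)) * a| ≤ c * Real.sqrt (2*(y+1)+3) := by
  have h1 : (0:ℝ) < 2*y+1 := by linarith
  have h2 : (2*(y+1)-1) = 2*y+1 := by ring
  have key : Real.sqrt ((2*(y+1)+3)/(2*(y+1)-1)) * Real.sqrt (2*y+1)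
      = Real.sqrt (2*(y+1)+3) := by
    rw [h2, ← Real.sqrt_mul (by apply div_nonneg <;> linarith),
      div_mul_cancel₀ _ h1.ne']
  calc |Real.sqrt ((2*(y+1)+3)/(2*(y+1)-1)) * a|
      = Real.sqrt ((2*(y+1)+3)/(2*(y+1)-1)) * |a| := by
        rw [abs_mul, abs_of_nonneg (Real.sqrt_nonneg _)]
    _ ≤ Real.sqrt ((2*(y+1)+3)/(2*(y+1)-1)) * (c * Real.sqrt (2*y+1)) :=
        mul_le_mul_of_nonneg_left ha (Real.sqrt_nonneg _)
    _ = c * (Real.sqrt ((2*(y+1)+3)/(2*(y+1)-1)) * Real.sqrt (2*y+1)) := by ring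
    _ = c * Real.sqrt (2*(y+1)+3) := by rw [key]

lemma termB (y c b : ℝ) (hy : 0 ≤ y) (hc : 0 ≤ c)
    (hb : |b| ≤ c * Real.sqrt (2*(y+1)+1)) :
    |Real.sqrt ((2*(y+1)+1)*(2*(y+1)+3)/((2*(y+1)+2)^2)) * b|
      ≤ c * Real.sqrt (2*(y+1)+3) := by
  have h1 : (0:ℝ) < (2*(y+1)+2)^2 := by positivity
  have key : Real.sqrt ((2*(y+1)+1)*(2*(y+1)+3)/((2*(y+1)+2)^2)) * Real.sqrt (2*(y+1)+1)
      ≤ Real.sqrt (2*(y+1)+3) := by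
    rw [← Real.sqrt_mul (div_nonneg (by nlinarith) (by positivity))]
    apply Real.sqrt_le_sqrt
    rw [div_mul_eq_mul_div, div_le_iff₀ h1]
    nlinarith
  calc |Real.sqrt ((2*(y+1)+1)*(2*(y+1)+3)/((2*(y+1)+2)^2)) * b|
      = Real.sqrt ((2*(y+1)+1)*(2*(y+1)+3)/((2*(y+1)+2)^2)) * |b| := by
        rw [abs_mul, abs_of_nonneg (Real.sqrt_nonneg _)]
    _ ≤ Real.sqrt ((2*(y+1)+1)*(2*(y+1)+3)/((2*(y+1)+2)^2)) * (c * Real.sqrt (2*(y+1)+1)) :=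
        mul_le_mul_of_nonneg_left hb (Real.sqrt_nonneg _)
    _ = c * (Real.sqrt ((2*(y+1)+1)*(2*(y+1)+3)/((2*(y+1)+2)^2)) * Real.sqrt (2*(y+1)+1)) := by
        ring
    _ ≤ c * Real.sqrt (2*(y+1)+3) := mul_le_mul_of_nonneg_left key hc

lemma pow_abs_le_one (t : ℝ) (h0 : 0 ≤ t) (h1 : t ≤ 1) (m : ℕ) : |t^m| ≤ 1 := by
  rw [abs_pow, abs_of_nonneg h0]; exact pow_le_one₀ h0 h1

lemma abs_sub'' (a b : ℝ) : |a - b| ≤ |a| + |b| := abs_sub a b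



/-- The recurrence defining the normalized coefficients `B̃_m^j`
(indexing: `X j m` means `B̃_m^j`). -/
def BtildeRec (X : ℕ → ℕ → ℝ) : Prop :=
  X 0 0 = 1 ∧ X 1 0 = Real.sqrt 3 ∧ X 1 1 = -(Real.sqrt 3 / 2) ∧
  ∀ j : ℕ, 1 ≤ j →
    (X (j+1) 0 = Real.sqrt ((2*(j:ℝ)+3)/(2*(j:ℝ)-1)) * X (j-1) 0) ∧
    (∀ m : ℕ, 1 ≤ m → m ≤ j - 1 →
      X (j+1) m
        = Real.sqrt ((2*(j:ℝ)+3)/(2*(j:ℝ)-1)) * (((j:ℝ)-1)/((j:ℝ)+1))^m * X (j-1) m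
          - Real.sqrt ((2*(j:ℝ)+1)*(2*(j:ℝ)+3)/((2*(j:ℝ)+2)^2)) *
              ((j:ℝ)/((j:ℝ)+1))^(m-1) * X j (m-1)) ∧
    (X (j+1) j
      = -(Real.sqrt ((2*(j:ℝ)+1)*(2*(j:ℝ)+3)/((2*(j:ℝ)+2)^2)) *
          ((j:ℝ)/((j:ℝ)+1))^(j-1) * X j (j-1))) ∧
    (X (j+1) (j+1)
      = -(Real.sqrt ((2*(j:ℝ)+1)*(2*(j:ℝ)+3)/((2*(j:ℝ)+2)^2)) *
          ((j:ℝ)/((j:ℝ)+1))^j * X j j))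

theorem Btilde_bound (X : ℕ → ℕ → ℝ) (hX : BtildeRec X) :
    ∀ j : ℕ, ∀ m : ℕ, m ≤ j → |X j m| ≤ 2^j * Real.sqrt (2*(j:ℝ)+1) := by
  obtain ⟨h00, h10, h11, hrec⟩ := hX
  intro j
  induction j using Nat.strong_induction_on with
  | _ j ih =>
    rcases j with _ | (_ | j)
    · intro m hm
      interval_cases m
      rw [h00]; norm_num
    · intro m hm
      have h3 : (0:ℝ) ≤ Real.sqrt 3 := Real.sqrt_nonneg 3
      have e3 : (2*((1:ℕ):ℝ)+1) = 3 := by norm_num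
      interval_cases m
      · rw [h10, e3, abs_of_nonneg h3, show ((2:ℝ)^(0+1)) = 2 by norm_num]
        nlinarith [h3]
      · rw [h11, e3, abs_neg, abs_of_nonneg (by positivity),
          show ((2:ℝ)^(0+1)) = 2 by norm_num]
        nlinarith [h3]
    · intro m hm
      have hy : (0:ℝ) ≤ (j:ℝ) := Nat.cast_nonneg j
      obtain ⟨r0, rmid, rj, rj1⟩ := hrec (j+1) (by omega)
      simp only [Nat.add_sub_cancel] at r0 rmid rj rj1
      push_cast at r0 rmid rj rj1 ⊢
      have hSq : Real.sqrt (2*((j:ℝ)+1+1)+1) = Real.sqrt (2*((j:ℝ)+1)+3) := by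
        ring_nf
      rw [hSq]
      have ihj := ih j (by omega)
      have ihj1 := ih (j+1) (by omega)
      have hXj1j : |X (j+1) j| ≤ 2^(j+1) * Real.sqrt (2*((j:ℝ)+1)+1) := by
        have := ihj1 j (by omega); push_cast at this; exact this
      have hXj1j1 : |X (j+1) (j+1)| ≤ 2^(j+1) * Real.sqrt (2*((j:ℝ)+1)+1) := by
        have := ihj1 (j+1) (by omega); push_cast at this; exact this
      have hSnn : (0:ℝ) ≤ Real.sqrt (2*((j:ℝ)+1)+3) := Real.sqrt_nonneg _
      have hr1 : ∀ k : ℕ, |(((j:ℝ)+1-1)/((j:ℝ)+1+1))^k| ≤ 1 := by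
        intro k
        apply pow_abs_le_one
        · apply div_nonneg <;> linarith
        · rw [div_le_one (by linarith)]; linarith
      have hr2 : ∀ k : ℕ, |(((j:ℝ)+1)/((j:ℝ)+1+1))^k| ≤ 1 := by
        intro k
        apply pow_abs_le_one
        · apply div_nonneg <;> linarith
        · rw [div_le_one (by linarith)]; linarith
      rcases Nat.eq_or_lt_of_le hm with rfl | hlt
      · -- m = j + 2
        rw [rj1, abs_neg, mul_assoc]
        have hb : |(((j:ℝ)+1)/((j:ℝ)+1+1))^(j+1) * X (j+1) (j+1)|
            ≤ 2^(j+1) * Real.sqrt (2*((j:ℝ)+1)+1) := by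
          rw [abs_mul]
          calc |(((j:ℝ)+1)/((j:ℝ)+1+1))^(j+1)| * |X (j+1) (j+1)|
              ≤ 1 * (2^(j+1) * Real.sqrt (2*((j:ℝ)+1)+1)) :=
                mul_le_mul (hr2 _) hXj1j1 (abs_nonneg _) zero_le_one
            _ = 2^(j+1) * Real.sqrt (2*((j:ℝ)+1)+1) := one_mul _
        have := termB (j:ℝ) (2^(j+1)) _ hy (by positivity) hb
        calc |Real.sqrt ((2*((j:ℝ)+1)+1)*(2*((j:ℝ)+1)+3)/((2*((j:ℝ)+1)+2)^2)) *
              ((((j:ℝ)+1)/((j:ℝ)+1+1))^(j+1) * X (j+1) (j+1))|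
            ≤ 2^(j+1) * Real.sqrt (2*((j:ℝ)+1)+3) := this
          _ ≤ 2^(j+1+1) * Real.sqrt (2*((j:ℝ)+1)+3) := by
              exact mul_le_mul_of_nonneg_right
                (pow_le_pow_right₀ (by norm_num : (1:ℝ) ≤ 2) (by omega)) hSnn
      · have hm1 : m ≤ j + 1 := by omega
        rcases Nat.eq_or_lt_of_le hm1 with rfl | hlt2
        · -- m = j + 1
          rw [rj, abs_neg, mul_assoc]
          have hb : |(((j:ℝ)+1)/((j:ℝ)+1+1))^j * X (j+1) j|
              ≤ 2^(j+1) * Real.sqrt (2*((j:ℝ)+1)+1) := by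
            rw [abs_mul]
            calc |(((j:ℝ)+1)/((j:ℝ)+1+1))^j| * |X (j+1) j|
                ≤ 1 * (2^(j+1) * Real.sqrt (2*((j:ℝ)+1)+1)) :=
                  mul_le_mul (hr2 _) hXj1j (abs_nonneg _) zero_le_one
              _ = 2^(j+1) * Real.sqrt (2*((j:ℝ)+1)+1) := one_mul _
          have := termB (j:ℝ) (2^(j+1)) _ hy (by positivity) hb
          calc |Real.sqrt ((2*((j:ℝ)+1)+1)*(2*((j:ℝ)+1)+3)/((2*((j:ℝ)+1)+2)^2)) *
                ((((j:ℝ)+1)/((j:ℝ)+1+1))^j * X (j+1) j)|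
              ≤ 2^(j+1) * Real.sqrt (2*((j:ℝ)+1)+3) := this
            _ ≤ 2^(j+1+1) * Real.sqrt (2*((j:ℝ)+1)+3) := by
                exact mul_le_mul_of_nonneg_right
                  (pow_le_pow_right₀ (by norm_num : (1:ℝ) ≤ 2) (by omega)) hSnn
        · have hmj : m ≤ j := by omega
          have hXjm : |X j m| ≤ 2^j * Real.sqrt (2*(j:ℝ)+1) := ihj m hmj
          rcases Nat.eq_zero_or_pos m with rfl | hm0
          · -- m = 0
            rw [r0]
            have := termA (j:ℝ) (2^j) _ hy hXjm
            calc |Real.sqrt ((2*((j:ℝ)+1)+3)/(2*((j:ℝ)+1)-1)) * X j 0|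
                ≤ 2^j * Real.sqrt (2*((j:ℝ)+1)+3) := this
              _ ≤ 2^(j+1+1) * Real.sqrt (2*((j:ℝ)+1)+3) := by
                  exact mul_le_mul_of_nonneg_right
                    (pow_le_pow_right₀ (by norm_num : (1:ℝ) ≤ 2) (by omega)) hSnn
          · -- 1 ≤ m ≤ j
            rw [rmid m hm0 hmj]
            have hXj1m : |X (j+1) (m-1)| ≤ 2^(j+1) * Real.sqrt (2*((j:ℝ)+1)+1) := by
              have := ihj1 (m-1) (by omega); push_cast at this; exact this
            have H1 : |Real.sqrt ((2*((j:ℝ)+1)+3)/(2*((j:ℝ)+1)-1)) *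
                (((j:ℝ)+1-1)/((j:ℝ)+1+1))^m * X j m|
                ≤ 2^j * Real.sqrt (2*((j:ℝ)+1)+3) := by
              rw [mul_assoc]
              apply termA (j:ℝ) (2^j) _ hy
              rw [abs_mul]
              calc |(((j:ℝ)+1-1)/((j:ℝ)+1+1))^m| * |X j m|
                  ≤ 1 * (2^j * Real.sqrt (2*(j:ℝ)+1)) :=
                    mul_le_mul (hr1 _) hXjm (abs_nonneg _) zero_le_one
                _ = 2^j * Real.sqrt (2*(j:ℝ)+1) := one_mul _
            have H2 : |Real.sqrt ((2*((j:ℝ)+1)+1)*(2*((j:ℝ)+1)+3)/((2*((j:ℝ)+1)+2)^2)) *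
                (((j:ℝ)+1)/((j:ℝ)+1+1))^(m-1) * X (j+1) (m-1)|
                ≤ 2^(j+1) * Real.sqrt (2*((j:ℝ)+1)+3) := by
              rw [mul_assoc]
              apply termB (j:ℝ) (2^(j+1)) _ hy (by positivity)
              rw [abs_mul]
              calc |(((j:ℝ)+1)/((j:ℝ)+1+1))^(m-1)| * |X (j+1) (m-1)|
                  ≤ 1 * (2^(j+1) * Real.sqrt (2*((j:ℝ)+1)+1)) :=
                    mul_le_mul (hr2 _) hXj1m (abs_nonneg _) zero_le_one
                _ = 2^(j+1) * Real.sqrt (2*((j:ℝ)+1)+1) := one_mul _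
            calc |Real.sqrt ((2*((j:ℝ)+1)+3)/(2*((j:ℝ)+1)-1)) *
                  (((j:ℝ)+1-1)/((j:ℝ)+1+1))^m * X j m -
                  Real.sqrt ((2*((j:ℝ)+1)+1)*(2*((j:ℝ)+1)+3)/((2*((j:ℝ)+1)+2)^2)) *
                  (((j:ℝ)+1)/((j:ℝ)+1+1))^(m-1) * X (j+1) (m-1)|
                ≤ |Real.sqrt ((2*((j:ℝ)+1)+3)/(2*((j:ℝ)+1)-1)) *
                    (((j:ℝ)+1-1)/((j:ℝ)+1+1))^m * X j m| +
                  |Real.sqrt ((2*((j:ℝ)+1)+1)*(2*((j:ℝ)+1)+3)/((2*((j:ℝ)+1)+2)^2)) *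
                    (((j:ℝ)+1)/((j:ℝ)+1+1))^(m-1) * X (j+1) (m-1)| := abs_sub'' _ _
              _ ≤ 2^j * Real.sqrt (2*((j:ℝ)+1)+3) + 2^(j+1) * Real.sqrt (2*((j:ℝ)+1)+3) := by
                  exact add_le_add H1 H2
              _ = ((2:ℝ)^j + 2^(j+1)) * Real.sqrt (2*((j:ℝ)+1)+3) := by ring
              _ ≤ 2^(j+1+1) * Real.sqrt (2*((j:ℝ)+1)+3) := by
                  apply mul_le_mul_of_nonneg_right _ hSnn
                  rw [pow_succ, pow_succ, pow_succ]
                  nlinarith [pow_pos (show (0:ℝ) < 2 by norm_num) j]
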